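/- For n odd the vector given by z_k = e^{2πik/n} (k = 0,…,n−1) is a cyclic n-root, and for n even the vector given by z_k = e^{(2k+1)πi/n} is a cyclic n-root. In both cases, the associated circulant matrix H_{ij} = ξ_{j−i}, where ξ_0 = 1 and ξ_j = z_1 z_2 ⋯ z_j, is a complex Hadamard matrix equivalent to the Fourier matrix F_n. -/

import Mathlib

open Complex Matrix

/-- The `n×n` Fourier matrix `(w^{ij})` with `w = e^{2πi/n}`. -/
noncomputable def Fourier (n : ℕ) : Matrix (ZMod n) (ZMod n) ℂ :=
  fun i j => Complex.exp (2 * Real.pi * Complex.I * (i.val * j.val) / n)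

/-- A complex Hadamard matrix: unimodular entries and pairwise orthogonal rows. -/
def IsHadamard {n : ℕ} [NeZero n] (H : Matrix (ZMod n) (ZMod n) ℂ) : Prop :=
  (∀ i j, ‖H i j‖ = 1) ∧ H * Hᴴ = (n : ℂ) • 1

/-- A cyclic `n`-root. -/
def IsCyclicRoot {n : ℕ} [NeZero n] (z : ZMod n → ℂ) : Prop :=
  (∀ k : ℕ, 1 ≤ k → k ≤ n - 1 →
      ∑ i : ZMod n, ∏ t ∈ Finset.range k, z (i + (t : ZMod n)) = 0) ∧
  ∏ i : ZMod n, z i = 1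

/-- Equivalence of complex Hadamard matrices. -/
def HadEquiv {I J : Type*} (H : Matrix I I ℂ) (K : Matrix J J ℂ) : Prop :=
  ∃ (σ τ : I ≃ J) (d e : I → ℂ),
    (∀ i, ‖d i‖ = 1) ∧ (∀ j, ‖e j‖ = 1) ∧
    ∀ i j, K (σ i) (τ j) = d i * e j * H i j

/-! ### Auxiliary lemmas -/

/-- The quadratic exponent function. -/
def auxQ (A m : ℤ) : ℤ := m * m + (A + 1) * m

lemma zmod_sum_eq {n : ℕ} [NeZero n] {M : Type*} [AddCommMonoid M] (f : ZMod n → M) :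
    ∑ i : ZMod n, f i = ∑ m ∈ Finset.range n, f (m : ZMod n) := by
  refine Finset.sum_nbij' (fun i => i.val) (fun m => (m : ZMod n)) ?_ ?_ ?_ ?_ ?_
  · intro a _; exact Finset.mem_range.mpr a.val_lt
  · intro a _; exact Finset.mem_univ _
  · intro a _; exact ZMod.natCast_rightInverse a
  · intro a ha; exact ZMod.val_cast_of_lt (Finset.mem_range.mp ha)
  · intro a _; rw [ZMod.natCast_rightInverse a]

lemma zmod_geom_sum_eq_zero {n : ℕ} [NeZero n] (u : ℂ) (hu1 : u ^ n = 1) (hu : u ≠ 1) :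
    ∑ i : ZMod n, u ^ i.val = 0 := by
  rw [zmod_sum_eq (fun i : ZMod n => u ^ i.val)]
  rw [Finset.sum_congr rfl fun m hm => by
    rw [ZMod.val_cast_of_lt (Finset.mem_range.mp hm)]]
  rw [geom_sum_eq hu, hu1, sub_self, zero_div]

lemma prod_zpow_eq {α : Type*} (s : Finset α) (ζ : ℂ) (hζ : ζ ≠ 0) (f : α → ℤ) :
    ∏ i ∈ s, ζ ^ f i = ζ ^ (∑ i ∈ s, f i) := by
  classical
  induction s using Finset.cons_induction with
  | empty => simp
  | cons a s ha ih => rw [Finset.prod_cons, Finset.sum_cons, ih, zpow_add₀ hζ]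

lemma gexp (n : ℕ) (m : ℤ) :
    Complex.exp (Real.pi * Complex.I / n) ^ m = Complex.exp (Real.pi * Complex.I * m / n) := by
  rw [← Complex.exp_int_mul]
  congr 1
  ring

lemma sum_aux (A : ℤ) (m : ℕ) :
    ∑ t ∈ Finset.range m, (2 * (t : ℤ) + 2 + A) = auxQ A m := by
  induction m with
  | zero => simp [auxQ]
  | succ k ih =>
      rw [Finset.sum_range_succ, ih]
      simp only [auxQ]
      push_cast
      ring

lemma sum_aux2 (A : ℤ) (m : ℕ) :
    ∑ t ∈ Finset.range m, (2 * (t : ℤ) + A) = (m : ℤ) * m + (A - 1) * m := by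
  induction m with
  | zero => simp
  | succ k ih =>
      rw [Finset.sum_range_succ, ih]
      push_cast
      ring

theorem main_aux (n : ℕ) [NeZero n] (A : ℤ) (hpar : (2 : ℤ) ∣ ((n : ℤ) + A + 1))
    (z : ZMod n → ℂ)
    (hz : ∀ c : ZMod n,
      z c = Complex.exp (Real.pi * Complex.I / n) ^ (2 * (c.val : ℤ) + A))
    (ξ : ZMod n → ℂ) (hξ : ∀ j : ZMod n, ξ j = ∏ t ∈ Finset.range j.val, z ((t : ZMod n) + 1))
    (H : Matrix (ZMod n) (ZMod n) ℂ) (hH : ∀ i j, H i j = ξ (j - i)) :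
    IsCyclicRoot z ∧ _root_.IsHadamard H ∧ HadEquiv H (Fourier n) := by
  have hn0 : (n : ℕ) ≠ 0 := NeZero.ne n
  have hn1 : 1 ≤ n := Nat.one_le_iff_ne_zero.mpr hn0
  set ζ : ℂ := Complex.exp (Real.pi * Complex.I / n) with hζdef
  have hζ0 : ζ ≠ 0 := Complex.exp_ne_zero _
  have hζ2n : ζ ^ (2 * (n : ℤ)) = 1 := by
    rw [hζdef, gexp]
    have h1 : (Real.pi : ℂ) * Complex.I * ((2 * (n : ℤ) : ℤ) : ℂ) / n
        = 2 * Real.pi * Complex.I := by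
      have hnc : (n : ℂ) ≠ 0 := Nat.cast_ne_zero.mpr hn0
      push_cast
      field_simp
    rw [h1, Complex.exp_two_pi_mul_I]
  -- congruence mod 2n
  have gcong : ∀ a b : ℤ, (2 * (n : ℤ)) ∣ (a - b) → ζ ^ a = ζ ^ b := by
    rintro a b ⟨c, hc⟩
    have ha : a = b + 2 * (n : ℤ) * c := by linarith
    rw [ha, zpow_add₀ hζ0, _root_.zpow_mul, hζ2n, _root_.one_zpow, mul_one]
  -- primitive root
  have hw : IsPrimitiveRoot (ζ ^ (2 : ℤ)) n := by
    have h2 : ζ ^ (2 : ℤ) = Complex.exp (2 * Real.pi * Complex.I / n) := by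
      rw [hζdef, gexp]
      congr 1
      push_cast
      ring
    rw [h2]
    exact Complex.isPrimitiveRoot_exp n hn0
  -- val congruence
  have valdvd : ∀ (c : ZMod n) (m : ℤ), ((m : ZMod n) = c) → (n : ℤ) ∣ (m - c.val) := by
    intro c m h
    have h0 : ((m - (c.val : ℤ) : ℤ) : ZMod n) = 0 := by
      push_cast
      rw [h, ZMod.natCast_val, ZMod.cast_id, sub_self]
    exact (ZMod.intCast_zmod_eq_zero_iff_dvd _ _).mp h0
  -- Q congruence
  have QCong : ∀ a b : ℤ, (n : ℤ) ∣ (a - b) → ζ ^ (auxQ A a) = ζ ^ (auxQ A b) := by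
    rintro a b ⟨k, hk⟩
    apply gcong
    have h2 : (2 : ℤ) ∣ k * (a + b + A + 1) := by
      have hcast : ((k * (a + b + A + 1) : ℤ) : ZMod 2) = 0 := by
        have h1 : ((a : ZMod 2) - (b : ZMod 2)) = (n : ZMod 2) * (k : ZMod 2) := by
          have := congrArg (Int.cast : ℤ → ZMod 2) hk
          push_cast at this
          linear_combination this
        have h2' : ((n : ZMod 2) + (A : ZMod 2) + 1) = 0 := by
          obtain ⟨c, hc⟩ := hpar
          have := congrArg (Int.cast : ℤ → ZMod 2) hc
          push_cast at this
          rw [this]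
          have h2z : (2 : ZMod 2) = 0 := rfl
          rw [h2z, zero_mul]
        have hsq : ∀ x : ZMod 2, x * x = x := by decide
        have h2z : (2 : ZMod 2) = 0 := rfl
        push_cast
        linear_combination (k : ZMod 2) * h1 + (n : ZMod 2) * hsq (k : ZMod 2)
          + (k : ZMod 2) * h2' + (k : ZMod 2) * (b : ZMod 2) * h2z
      exact (ZMod.intCast_zmod_eq_zero_iff_dvd _ 2).mp hcast
    obtain ⟨c2, hc2⟩ := h2
    refine ⟨c2, ?_⟩
    simp only [auxQ]
    linear_combination (a + b + A + 1) * hk + (n : ℤ) * hc2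
  -- ξ in closed form
  have hξg : ∀ c : ZMod n, ξ c = ζ ^ (auxQ A c.val) := by
    intro c
    rw [hξ]
    have step : ∀ t ∈ Finset.range c.val,
        z ((t : ZMod n) + 1) = ζ ^ (2 * (t : ℤ) + 2 + A) := by
      intro t _
      rw [hz]
      apply gcong
      obtain ⟨c1, h1⟩ := valdvd ((t : ZMod n) + 1) ((t : ℤ) + 1) (by push_cast; ring)
      exact ⟨-c1, by linear_combination (-2 : ℤ) * h1⟩
    rw [Finset.prod_congr rfl step, prod_zpow_eq _ _ hζ0, sum_aux]
  -- |ζ^m| = 1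
  have habs : ∀ m : ℤ, ‖ζ ^ m‖ = 1 := by
    intro m
    rw [norm_zpow]
    have h1 : ‖ζ‖ = 1 := by
      rw [hζdef]
      have : (Real.pi : ℂ) * Complex.I / n = ((Real.pi / n : ℝ) : ℂ) * Complex.I := by
        push_cast; ring
      rw [this, Complex.norm_exp]
      simp
    rw [h1, _root_.one_zpow]
  -- conjugation
  have hcz : (starRingEnd ℂ) ζ = ζ⁻¹ := by
    rw [hζdef, ← Complex.exp_conj, ← Complex.exp_neg]
    congr 1
    have : (starRingEnd ℂ) ((Real.pi : ℂ) * Complex.I / (n : ℂ))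
        = (starRingEnd ℂ) ((Real.pi : ℂ)) * (starRingEnd ℂ) Complex.I / (starRingEnd ℂ) ((n:ℂ)) := by
      rw [map_div₀, _root_.map_mul]
    rw [this, Complex.conj_ofReal, Complex.conj_I, map_natCast]
    ring
  have hconj : ∀ m : ℤ, star (ζ ^ m) = ζ ^ (-m) := by
    intro m
    rw [Complex.star_def, map_zpow₀, hcz, _root_.inv_zpow, ← _root_.zpow_neg]
  -- the geometric-sum engine
  have geom : ∀ D : ℤ, ((D : ZMod n) ≠ 0) → ∑ i : ZMod n, (ζ ^ (2 * D)) ^ i.val = 0 := by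
    intro D hD
    apply zmod_geom_sum_eq_zero
    · rw [← zpow_natCast, ← _root_.zpow_mul]
      apply gcong _ 0 ⟨D, by ring⟩ |>.trans (zpow_zero ζ)
    · rw [_root_.zpow_mul]
      intro h1
      rw [hw.zpow_eq_one_iff_dvd] at h1
      exact hD ((ZMod.intCast_zmod_eq_zero_iff_dvd D n).mpr h1)
  refine ⟨⟨?_, ?_⟩, ⟨?_, ?_⟩, ?_⟩
  -- cyclic sums
  · intro k hk1 hk2
    have hkn : k < n := by omega
    have hprod : ∀ i : ZMod n, ∏ t ∈ Finset.range k, z (i + (t : ZMod n))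
        = ζ ^ (∑ t ∈ Finset.range k, (2 * (t : ℤ) + A)) * (ζ ^ (2 * (k : ℤ))) ^ i.val := by
      intro i
      have step : ∀ t ∈ Finset.range k,
          z (i + (t : ZMod n)) = ζ ^ (2 * ((i.val : ℤ) + t) + A) := by
        intro t _
        rw [hz]
        apply gcong
        obtain ⟨c1, h1⟩ := valdvd (i + (t : ZMod n)) ((i.val : ℤ) + t)
          (by push_cast [ZMod.natCast_val, ZMod.cast_id]; ring)
        exact ⟨-c1, by linear_combination (-2 : ℤ) * h1⟩
      rw [Finset.prod_congr rfl step, prod_zpow_eq _ _ hζ0,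
        ← zpow_natCast (ζ ^ (2 * (k : ℤ))), ← _root_.zpow_mul, ← zpow_add₀ hζ0]
      congr 1
      have : ∀ t ∈ Finset.range k,
          2 * ((i.val : ℤ) + t) + A = (2 * (t : ℤ) + A) + 2 * (i.val : ℤ) := by
        intro t _; ring
      rw [Finset.sum_congr rfl this, Finset.sum_add_distrib, Finset.sum_const,
        Finset.card_range, nsmul_eq_mul]
      ring
    rw [Finset.sum_congr rfl fun i _ => hprod i, ← Finset.mul_sum]
    have hD : ((k : ℤ) : ZMod n) ≠ 0 := by
      push_cast
      intro h
      have hd := (ZMod.natCast_eq_zero_iff k n).mp h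
      exact absurd (Nat.le_of_dvd (by omega) hd) (by omega)
    rw [geom (k : ℤ) hD, mul_zero]
  -- product = 1
  · rw [Finset.prod_congr rfl fun i _ => hz i, prod_zpow_eq _ _ hζ0]
    have hs : ∑ i : ZMod n, (2 * (i.val : ℤ) + A) = (n : ℤ) * n + (A - 1) * n := by
      rw [zmod_sum_eq (fun i : ZMod n => 2 * (i.val : ℤ) + A)]
      have hcg : ∀ m ∈ Finset.range n,
          2 * (((m : ZMod n)).val : ℤ) + A = 2 * (m : ℤ) + A := by
        intro m hm
        rw [ZMod.val_cast_of_lt (Finset.mem_range.mp hm)]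
      rw [Finset.sum_congr rfl hcg, sum_aux2]
    rw [hs]
    obtain ⟨c, hc⟩ := hpar
    have : ζ ^ ((n : ℤ) * n + (A - 1) * n) = ζ ^ (0 : ℤ) := by
      apply gcong
      exact ⟨c - 1, by linear_combination (n : ℤ) * hc⟩
    rw [this, zpow_zero]
  -- Hadamard entries
  · intro i j
    rw [hH, hξg]
    exact habs _
  -- orthogonality
  · ext i j
    rw [Matrix.mul_apply, Matrix.smul_apply]
    have hterm : ∀ k : ZMod n, H i k * (Hᴴ) k j
        = ζ ^ (auxQ A ((k.val : ℤ) - i.val) - auxQ A ((k.val : ℤ) - j.val)) := by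
      intro k
      rw [Matrix.conjTranspose_apply, hH, hH, hξg, hξg]
      have e1 : ζ ^ (auxQ A ((k - i).val : ℤ)) = ζ ^ (auxQ A ((k.val : ℤ) - i.val)) := by
        apply QCong
        have := valdvd (k - i) ((k.val : ℤ) - i.val)
          (by push_cast [ZMod.natCast_val, ZMod.cast_id]; ring)
        have h2 := dvd_neg.mpr this
        rwa [neg_sub] at h2
      have e2 : ζ ^ (auxQ A ((k - j).val : ℤ)) = ζ ^ (auxQ A ((k.val : ℤ) - j.val)) := by
        apply QCong
        have := valdvd (k - j) ((k.val : ℤ) - j.val)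
          (by push_cast [ZMod.natCast_val, ZMod.cast_id]; ring)
        have h2 := dvd_neg.mpr this
        rwa [neg_sub] at h2
      rw [e1, e2, hconj, ← zpow_add₀ hζ0, ← sub_eq_add_neg]
    rw [Finset.sum_congr rfl fun k _ => hterm k]
    by_cases hij : i = j
    · subst hij
      have : ∀ k : ZMod n,
          ζ ^ (auxQ A ((k.val : ℤ) - i.val) - auxQ A ((k.val : ℤ) - i.val)) = 1 := by
        intro k
        rw [sub_self, zpow_zero]
      rw [Finset.sum_congr rfl fun k _ => this k, Finset.sum_const, Finset.card_univ,
        ZMod.card, nsmul_eq_mul, mul_one, Matrix.one_apply_eq, smul_eq_mul, mul_one]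
    · have key : ∀ k : ZMod n,
          auxQ A ((k.val : ℤ) - i.val) - auxQ A ((k.val : ℤ) - j.val)
          = ((j.val : ℤ) - i.val) * (A + 1 - i.val - j.val) + 2 * ((j.val : ℤ) - i.val) * k.val := by
        intro k
        simp only [auxQ]
        ring
      have hterm2 : ∀ k : ZMod n,
          ζ ^ (auxQ A ((k.val : ℤ) - i.val) - auxQ A ((k.val : ℤ) - j.val))
          = ζ ^ (((j.val : ℤ) - i.val) * (A + 1 - i.val - j.val))
            * (ζ ^ (2 * ((j.val : ℤ) - i.val))) ^ k.val := by
        intro k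
        rw [key, zpow_add₀ hζ0, ← zpow_natCast (ζ ^ (2 * ((j.val : ℤ) - i.val))), ← _root_.zpow_mul]
      rw [Finset.sum_congr rfl fun k _ => hterm2 k, ← Finset.mul_sum]
      have hD : (((j.val : ℤ) - i.val : ℤ) : ZMod n) ≠ 0 := by
        intro h
        apply hij
        push_cast [ZMod.natCast_val, ZMod.cast_id] at h
        exact (sub_eq_zero.mp h).symm
      rw [geom _ hD, mul_zero, Matrix.one_apply_ne hij, smul_eq_mul, mul_zero]
  -- equivalence with the Fourier matrix
  · refine ⟨Equiv.refl _, Equiv.neg _, fun i => ζ ^ (-(auxQ A (-(i.val : ℤ)))),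
      fun j => ζ ^ (-(auxQ A (j.val : ℤ))), fun i => habs _, fun j => habs _, ?_⟩
    intro i j
    show Fourier n i (-j) = _
    have lhs : Fourier n i (-j) = ζ ^ (-(2 * (i.val : ℤ) * j.val)) := by
      have h1 : Fourier n i (-j) = ζ ^ (2 * ((i.val : ℤ) * ((-j : ZMod n).val : ℤ))) := by
        rw [Fourier, hζdef, gexp]
        congr 1
        push_cast
        ring
      rw [h1]
      apply gcong
      obtain ⟨c1, h2⟩ := valdvd (-j) (-(j.val : ℤ))
        (by push_cast [ZMod.natCast_val, ZMod.cast_id]; ring)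
      exact ⟨-(i.val : ℤ) * c1, by linear_combination (-2 : ℤ) * (i.val : ℤ) * h2⟩
    rw [lhs, hH, hξg]
    have e1 : ζ ^ (auxQ A ((j - i).val : ℤ)) = ζ ^ (auxQ A ((j.val : ℤ) - i.val)) := by
      apply QCong
      have := valdvd (j - i) ((j.val : ℤ) - i.val)
        (by push_cast [ZMod.natCast_val, ZMod.cast_id]; ring)
      have h2 := dvd_neg.mpr this
      rwa [neg_sub] at h2
    rw [e1, ← zpow_add₀ hζ0, ← zpow_add₀ hζ0]
    congr 1
    simp only [auxQ]
    ring

/-- The Fourier matrix can be put in circulant form: for `n` odd `z_k = e^{2πik/n}`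
and for `n` even `z_k = e^{(2k+1)πi/n}` is a cyclic `n`-root, and the associated
circulant matrix is Hadamard and equivalent to `F_n`. -/
theorem fourier_circulant_form
    (n : ℕ) [NeZero n] (z : ZMod n → ℂ)
    (hzodd : Odd n → ∀ k : ZMod n, z k = Complex.exp (2 * Real.pi * Complex.I * k.val / n))
    (hzeven : Even n → ∀ k : ZMod n,
      z k = Complex.exp ((2 * k.val + 1) * Real.pi * Complex.I / n))
    (ξ : ZMod n → ℂ) (hξ : ∀ j : ZMod n, ξ j = ∏ t ∈ Finset.range j.val, z ((t : ZMod n) + 1))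
    (H : Matrix (ZMod n) (ZMod n) ℂ) (hH : ∀ i j, H i j = ξ (j - i)) :
    IsCyclicRoot z ∧ _root_.IsHadamard H ∧ HadEquiv H (Fourier n) := by
  rcases Nat.even_or_odd n with hn | hn
  · -- n even, A = 1
    obtain ⟨m, hm⟩ := hn
    refine main_aux n 1 ⟨(m : ℤ) + 1, by push_cast [hm]; ring⟩ z ?_ ξ hξ H hH
    intro c
    rw [hzeven (by exact ⟨m, hm⟩) c, gexp]
    congr 1
    push_cast
    ring
  · -- n odd, A = 0
    obtain ⟨m, hm⟩ := hn
    refine main_aux n 0 ⟨(m : ℤ) + 1, by push_cast [hm]; ring⟩ z ?_ ξ hξ H hH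
    intro c
    rw [hzodd (by exact ⟨m, hm⟩) c, gexp]
    congr 1
    push_cast
    ring
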